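/- arXiv:1009.5094 — 13 statements merged into one kernel-verified Lean document; each statement's English description precedes it below -/
import Mathlib

section
/- Let μ : ℝ → ℝ be twice differentiable with μ'(s) > 0 and μ''(s) ≤ 0 for all s ≥ 0, and let α > 0, T > 0 and S₀ > 0. Then the function f(s) = s + (S₀ − s)·exp(−α·μ(s)·T) is strictly convex on the interval (0, S₀); indeed its second derivative equals [2μ'(s) + (α·μ'(s)²·T − μ''(s))(S₀ − s)]·α·T·exp(−α·μ(s)·T), which is strictly positive on (0, S₀). -/
open Set

/-- Strict convexity of `s ↦ S_l(T) = s + (S₀ - s) exp(-α μ(s) T)` on `(0, S₀)`,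
with the explicit formula for its second derivative. -/
theorem stmt_2 (μ μ' μ'' : ℝ → ℝ)
    (hd1 : ∀ s, HasDerivAt μ (μ' s) s)
    (hd2 : ∀ s, HasDerivAt μ' (μ'' s) s)
    (hμ' : ∀ s ≥ (0 : ℝ), 0 < μ' s)
    (hμ'' : ∀ s ≥ (0 : ℝ), μ'' s ≤ 0)
    (α T S₀ : ℝ) (hα : 0 < α) (hT : 0 < T) (hS₀ : 0 < S₀)
    (f : ℝ → ℝ)
    (hf : f = fun s => s + (S₀ - s) * Real.exp (-(α * μ s * T))) :
    StrictConvexOn ℝ (Ioo 0 S₀) f ∧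
    ∀ s ∈ Ioo 0 S₀,
      deriv (deriv f) s =
        (2 * μ' s + (α * (μ' s) ^ 2 * T - μ'' s) * (S₀ - s)) * (α * T) *
          Real.exp (-(α * μ s * T)) ∧
      0 < deriv (deriv f) s := by
  set E : ℝ → ℝ := fun s => Real.exp (-(α * μ s * T)) with hE
  set F' : ℝ → ℝ := fun s => 1 - E s * (1 + (S₀ - s) * (α * μ' s * T)) with hF'
  set F'' : ℝ → ℝ := fun s =>
    (2 * μ' s + (α * (μ' s) ^ 2 * T - μ'' s) * (S₀ - s)) * (α * T) * E s with hF''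
  have hg : ∀ s, HasDerivAt (fun s => -(α * μ s * T)) (-(α * μ' s * T)) s :=
    fun s => (((hd1 s).const_mul α).mul_const T).neg
  have hEd : ∀ s, HasDerivAt E (E s * (-(α * μ' s * T))) s := fun s => (hg s).exp
  have hf1 : ∀ s, HasDerivAt f (F' s) s := by
    intro s
    rw [hf]
    have := (hasDerivAt_id s).add (((hasDerivAt_id s).const_sub S₀).mul (hEd s))
    convert this using 1
    · rfl
    · rfl
    · rfl
    simp only [hF', id_eq]
    ring
  have hf2 : ∀ s, HasDerivAt F' (F'' s) s := by
    intro s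
    have hh : HasDerivAt (fun s => 1 + (S₀ - s) * (α * μ' s * T))
        ((-1) * (α * μ' s * T) + (S₀ - s) * (α * μ'' s * T)) s := by
      have := (((hasDerivAt_id s).const_sub S₀).mul (((hd2 s).const_mul α).mul_const T)).const_add 1
      convert this using 1 <;> rfl
    have := ((hEd s).mul hh).const_sub 1
    convert this using 1
    · rfl
    · rfl
    · rfl
    simp only [hF'', id_eq]
    ring
  have hderiv1 : deriv f = F' := funext fun s => (hf1 s).deriv
  have hderiv2 : ∀ s, deriv (deriv f) s = F'' s := by
    intro s; rw [hderiv1]; exact (hf2 s).deriv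
  have hpos : ∀ s ∈ Ioo (0:ℝ) S₀, 0 < F'' s := by
    intro s hs
    have h1 := hμ' s hs.1.le
    have h2 := hμ'' s hs.1.le
    have h3 : 0 < S₀ - s := by linarith [hs.2]
    have h4 : 0 < E s := Real.exp_pos _
    have h5 : 0 < α * (μ' s) ^ 2 * T - μ'' s := by nlinarith [mul_pos (mul_pos hα (pow_pos h1 2)) hT]
    have h6 : 0 < 2 * μ' s + (α * (μ' s) ^ 2 * T - μ'' s) * (S₀ - s) := by positivity
    have : 0 < (2 * μ' s + (α * (μ' s) ^ 2 * T - μ'' s) * (S₀ - s)) * (α * T) * E s := by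
      positivity
    exact this
  constructor
  · apply strictConvexOn_of_deriv2_pos (convex_Ioo 0 S₀)
    · exact (continuous_iff_continuousAt.mpr fun s => (hf1 s).differentiableAt.continuousAt).continuousOn
    · intro s hs
      rw [interior_Ioo] at hs
      have : deriv^[2] f s = deriv (deriv f) s := by
        simp [Function.iterate_succ, Function.iterate_one]
      rw [this, hderiv2]
      exact hpos s hs
  · intro s hs
    refine ⟨?_, ?_⟩
    · rw [hderiv2]
    · rw [hderiv2]; exact hpos s hs
end

section
/- Let μ : ℝ → ℝ be twice differentiable with μ(0) = 0, μ'(s) > 0 and μ''(s) ≤ 0 for all s ≥ 0 (Assumption A1), let α > 0 and 0 < S̲ < S₀. Then the function T_f(s) = ln((S₀ − s)/(S̲ − s)) / (α·μ(s)) has a unique minimizer on the interval (0, S̲). -/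
open Set

/-- Proposition 1: under Assumption A1, the hitting time `T_f` has a unique
minimizer on `(0, S̲)`. -/
theorem stmt_3 (μ μ' μ'' : ℝ → ℝ)
    (hd1 : ∀ s, HasDerivAt μ (μ' s) s)
    (hd2 : ∀ s, HasDerivAt μ' (μ'' s) s)
    (hμ0 : μ 0 = 0)
    (hμ' : ∀ s ≥ (0 : ℝ), 0 < μ' s)
    (hμ'' : ∀ s ≥ (0 : ℝ), μ'' s ≤ 0)
    (α Sbar S₀ : ℝ) (hα : 0 < α) (hSbar : 0 < Sbar) (hS₀ : Sbar < S₀)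
    (Tf : ℝ → ℝ)
    (hTf : ∀ s, Tf s = Real.log ((S₀ - s) / (Sbar - s)) / (α * μ s)) :
    ∃! s' : ℝ, s' ∈ Ioo 0 Sbar ∧ ∀ s ∈ Ioo 0 Sbar, Tf s' ≤ Tf s := by
  set L : ℝ → ℝ := fun s => Real.log (S₀ - s) - Real.log (Sbar - s) with hLdef
  set L' : ℝ → ℝ := fun s => (Sbar - s)⁻¹ - (S₀ - s)⁻¹ with hL'def
  set φ : ℝ → ℝ := fun s => L' s * μ s - L s * μ' s with hφdef
  -- basic positivity on Iio Sbar
  have hSb : ∀ s < Sbar, 0 < Sbar - s := fun s hs => by linarith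
  have hS0 : ∀ s < Sbar, 0 < S₀ - s := fun s hs => by linarith
  have hlt : ∀ s < Sbar, Sbar - s < S₀ - s := fun s hs => by linarith
  -- μ strictly monotone on Ici 0
  have hμcont : Continuous μ := by
    rw [continuous_iff_continuousAt]; exact fun s => (hd1 s).continuousAt
  have hμmono : StrictMonoOn μ (Ici 0) := by
    apply strictMonoOn_of_deriv_pos (convex_Ici 0) hμcont.continuousOn
    intro x hx
    rw [interior_Ici] at hx
    rw [(hd1 x).deriv]
    exact hμ' x (le_of_lt hx)
  have hμpos : ∀ s ∈ Ioo (0:ℝ) Sbar, 0 < μ s := by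
    intro s hs
    have := hμmono (self_mem_Ici) (le_of_lt hs.1) hs.1
    rwa [hμ0] at this
  -- L positive on Iio Sbar
  have hLpos : ∀ s < Sbar, 0 < L s := by
    intro s hs
    have := Real.log_lt_log (hSb s hs) (hlt s hs)
    simp only [hLdef]; linarith
  have hL'pos : ∀ s < Sbar, 0 < L' s := by
    intro s hs
    have h := (inv_strictAnti₀ (hSb s hs) (hlt s hs))
    simp only [hL'def]; linarith
  -- derivatives
  have hLd : ∀ s < Sbar, HasDerivAt L (L' s) s := by
    intro s hs
    have h1 : HasDerivAt (fun x : ℝ => S₀ - x) (-1) s := (hasDerivAt_id s).const_sub S₀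
    have h2 : HasDerivAt (fun x : ℝ => Sbar - x) (-1) s := (hasDerivAt_id s).const_sub Sbar
    have g1 := (Real.hasDerivAt_log (ne_of_gt (hS0 s hs))).comp s h1
    have g2 := (Real.hasDerivAt_log (ne_of_gt (hSb s hs))).comp s h2
    have := g1.sub g2
    refine this.congr_deriv ?_
    simp [hL'def]; ring
  have hL'd : ∀ s < Sbar, HasDerivAt L' ((Sbar - s)⁻¹ ^ 2 - (S₀ - s)⁻¹ ^ 2) s := by
    intro s hs
    have h1 : HasDerivAt (fun x : ℝ => S₀ - x) (-1) s := (hasDerivAt_id s).const_sub S₀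
    have h2 : HasDerivAt (fun x : ℝ => Sbar - x) (-1) s := (hasDerivAt_id s).const_sub Sbar
    have g1 := h1.inv (ne_of_gt (hS0 s hs))
    have g2 := h2.inv (ne_of_gt (hSb s hs))
    have := g2.sub g1
    refine this.congr_deriv ?_
    field_simp
  have hφd : ∀ s < Sbar, HasDerivAt φ
      (((Sbar - s)⁻¹ ^ 2 - (S₀ - s)⁻¹ ^ 2) * μ s - L s * μ'' s) s := by
    intro s hs
    have := ((hL'd s hs).mul (hd1 s)).sub ((hLd s hs).mul (hd2 s))
    refine this.congr_deriv ?_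
    ring
  -- φ strictly increasing on Ioo 0 Sbar
  have hφ'pos : ∀ s ∈ Ioo (0:ℝ) Sbar, 0 < ((Sbar - s)⁻¹ ^ 2 - (S₀ - s)⁻¹ ^ 2) * μ s - L s * μ'' s := by
    intro s hs
    have h1 : (S₀ - s)⁻¹ < (Sbar - s)⁻¹ := inv_strictAnti₀ (hSb s hs.2) (hlt s hs.2)
    have h1' : (0:ℝ) < (S₀ - s)⁻¹ := inv_pos.mpr (hS0 s hs.2)
    have hsq : (S₀ - s)⁻¹ ^ 2 < (Sbar - s)⁻¹ ^ 2 := by nlinarith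
    have hm := hμpos s hs
    have hLp := hLpos s hs.2
    have hμ''n := hμ'' s (le_of_lt hs.1)
    have h3 : L s * μ'' s ≤ 0 := mul_nonpos_of_nonneg_of_nonpos (le_of_lt hLp) hμ''n
    have h4 : 0 < ((Sbar - s)⁻¹ ^ 2 - (S₀ - s)⁻¹ ^ 2) * μ s :=
      mul_pos (by linarith) hm
    exact sub_pos.mpr (lt_of_le_of_lt h3 h4)
  have hφmono : StrictMonoOn φ (Ioo 0 Sbar) := by
    apply strictMonoOn_of_deriv_pos (convex_Ioo _ _)
    · exact fun x hx => ((hφd x hx.2).continuousAt).continuousWithinAt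
    · intro x hx
      rw [interior_Ioo] at hx
      rw [(hφd x hx.2).deriv]
      exact hφ'pos x hx
  -- Tf = L / (α μ) on Ioo 0 Sbar
  have hTfL : ∀ s < Sbar, Tf s = L s / (α * μ s) := by
    intro s hs
    rw [hTf s, Real.log_div (ne_of_gt (hS0 s hs)) (ne_of_gt (hSb s hs))]
  -- derivative of Tf on Ioo 0 Sbar
  have hTd : ∀ s ∈ Ioo (0:ℝ) Sbar, HasDerivAt Tf (α * φ s / (α * μ s) ^ 2) s := by
    intro s hs
    have hne : α * μ s ≠ 0 := ne_of_gt (mul_pos hα (hμpos s hs))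
    have hG : HasDerivAt (fun x => L x / (α * μ x))
        ((L' s * (α * μ s) - L s * (α * μ' s)) / (α * μ s) ^ 2) s :=
      (hLd s hs.2).div ((hd1 s).const_mul α) hne
    have heq : (fun x => L x / (α * μ x)) =ᶠ[nhds s] Tf := by
      filter_upwards [Ioo_mem_nhds hs.1 hs.2] with x hx
      exact (hTfL x hx.2).symm
    have := hG.congr_of_eventuallyEq heq.symm
    refine this.congr_deriv ?_
    simp only [hφdef]
    ring
  -- critical points: any minimizer has φ = 0
  have hcrit : ∀ y ∈ Ioo (0:ℝ) Sbar, (∀ s ∈ Ioo (0:ℝ) Sbar, Tf y ≤ Tf s) → φ y = 0 := by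
    intro y hy hmin
    have hloc : IsLocalMin Tf y := by
      filter_upwards [Ioo_mem_nhds hy.1 hy.2] with x hx
      exact hmin x hx
    have h0 := hloc.hasDerivAt_eq_zero (hTd y hy)
    have hne : (α * μ y) ^ 2 ≠ 0 := pow_ne_zero _ (ne_of_gt (mul_pos hα (hμpos y hy)))
    have h1 := (div_eq_zero_iff.mp h0).resolve_right hne
    rcases mul_eq_zero.mp h1 with h | h
    · exact absurd h (ne_of_gt hα)
    · exact h
  -- L monotone on Iio Sbar
  have hLmono : MonotoneOn L (Iio Sbar) := by
    apply monotoneOn_of_deriv_nonneg (convex_Iio _)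
    · exact fun x hx => ((hLd x hx).continuousAt).continuousWithinAt
    · intro x hx
      rw [interior_Iio] at hx
      exact ((hLd x hx).differentiableAt).differentiableWithinAt
    · intro x hx
      rw [interior_Iio] at hx
      rw [(hLd x hx).deriv]
      exact le_of_lt (hL'pos x hx)
  -- reference point c
  set c : ℝ := Sbar / 2 with hcdef
  have hc : c ∈ Ioo (0:ℝ) Sbar := ⟨by positivity, by simp only [hcdef]; linarith⟩
  set M : ℝ := Tf c with hMdef
  have hMpos : 0 < M := by
    rw [hMdef, hTfL c hc.2]
    exact div_pos (hLpos c hc.2) (mul_pos hα (hμpos c hc))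
  have hL0pos : 0 < L 0 := hLpos 0 hSbar
  -- choose a
  have hεpos : 0 < L 0 / (α * (M + 1)) := div_pos hL0pos (mul_pos hα (by linarith))
  obtain ⟨δ, hδpos, hδ⟩ := Metric.continuousAt_iff.mp (hd1 0).continuousAt _ hεpos
  set a : ℝ := min (δ / 2) c with hadef
  have ha0 : 0 < a := lt_min (by linarith) hc.1
  have hac : a ≤ c := min_le_right _ _
  have hIa : ∀ s ∈ Ioo (0:ℝ) Sbar, s ≤ a → M < Tf s := by
    intro s hs hsa
    have hμs : μ s < L 0 / (α * (M + 1)) := by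
      have : dist s 0 < δ := by
        rw [Real.dist_eq, sub_zero, abs_of_pos hs.1]
        calc s ≤ a := hsa
          _ ≤ δ / 2 := min_le_left _ _
          _ < δ := by linarith
      have := hδ this
      rw [Real.dist_eq, hμ0, sub_zero] at this
      exact lt_of_le_of_lt (le_abs_self _) this
    have hμsp := hμpos s hs
    have hL0s : L 0 ≤ L s := hLmono (mem_Iio.mpr hSbar) (mem_Iio.mpr hs.2) (le_of_lt hs.1)
    have h1 : L 0 / (α * μ s) ≤ Tf s := by
      rw [hTfL s hs.2]
      exact (div_le_div_iff_of_pos_right (mul_pos hα hμsp)).mpr hL0s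
    have h2 : L 0 / (α * (L 0 / (α * (M + 1)))) < L 0 / (α * μ s) := by
      apply div_lt_div_of_pos_left hL0pos (mul_pos hα hμsp)
      have : α * μ s < α * (L 0 / (α * (M + 1))) := by
        exact (mul_lt_mul_iff_right₀ hα).mpr hμs
      linarith
    have h3 : L 0 / (α * (L 0 / (α * (M + 1)))) = M + 1 := by
      have h0 : L 0 ≠ 0 := ne_of_gt hL0pos
      have hM1 : M + 1 ≠ 0 := by linarith
      field_simp
    linarith
  -- choose b
  set R : ℝ := Real.log (S₀ - Sbar) - α * μ Sbar * (M + 1) with hRdef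
  set η : ℝ := min (Sbar - c) (Real.exp R) with hηdef
  have hηpos : 0 < η := lt_min (by simp only [hcdef]; linarith) (Real.exp_pos R)
  set b : ℝ := Sbar - η with hbdef
  have hcb : c ≤ b := by
    have := min_le_left (Sbar - c) (Real.exp R)
    simp only [hbdef, hηdef]; linarith
  have hbS : b < Sbar := by simp only [hbdef]; linarith
  have hμSpos : 0 < μ Sbar := by
    have := hμmono self_mem_Ici (le_of_lt hSbar) hSbar
    rwa [hμ0] at this
  have hIb : ∀ s ∈ Ioo (0:ℝ) Sbar, b ≤ s → M < Tf s := by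
    intro s hs hbs
    have hLb : α * μ Sbar * (M + 1) ≤ L b := by
      have h1 : Real.log η ≤ R := by
        calc Real.log η ≤ Real.log (Real.exp R) :=
              Real.log_le_log hηpos (min_le_right _ _)
          _ = R := Real.log_exp R
      have h2 : Real.log (S₀ - Sbar) ≤ Real.log (S₀ - b) :=
        Real.log_le_log (by linarith) (by simp only [hbdef]; linarith)
      have hb' : Sbar - b = η := by simp [hbdef]
      simp only [hLdef, hb']
      simp only [hRdef] at h1
      linarith
    have hLs : L b ≤ L s := hLmono hbS hs.2 hbs
    have hμs : μ s ≤ μ Sbar := le_of_lt (hμmono (le_of_lt hs.1) (le_of_lt hSbar) hs.2)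
    have hμsp := hμpos s hs
    have h1 : L s / (α * μ Sbar) ≤ Tf s := by
      rw [hTfL s hs.2]
      exact div_le_div_of_nonneg_left (le_of_lt (hLpos s hs.2))
        (mul_pos hα hμsp) ((mul_le_mul_iff_right₀ hα).mpr hμs)
    have h2 : α * μ Sbar * (M + 1) / (α * μ Sbar) ≤ L s / (α * μ Sbar) :=
      (div_le_div_iff_of_pos_right (mul_pos hα hμSpos)).mpr (le_trans hLb hLs)
    have h3 : α * μ Sbar * (M + 1) / (α * μ Sbar) = M + 1 :=
      mul_div_cancel_left₀ _ (ne_of_gt (mul_pos hα hμSpos))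
    linarith
  -- compact minimization
  have hab : a ≤ b := le_trans hac hcb
  have hKsub : Icc a b ⊆ Ioo (0:ℝ) Sbar := fun x hx => ⟨lt_of_lt_of_le ha0 hx.1, lt_of_le_of_lt hx.2 hbS⟩
  have hcK : c ∈ Icc a b := ⟨hac, hcb⟩
  have hTcont : ContinuousOn Tf (Icc a b) :=
    fun x hx => ((hTd x (hKsub hx)).continuousAt).continuousWithinAt
  obtain ⟨x₀, hx₀K, hx₀min⟩ := isCompact_Icc.exists_isMinOn ⟨c, hcK⟩ hTcont
  have hx₀Ioo : x₀ ∈ Ioo (0:ℝ) Sbar := hKsub hx₀K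
  have hglobal : ∀ s ∈ Ioo (0:ℝ) Sbar, Tf x₀ ≤ Tf s := by
    intro s hs
    rcases le_or_gt s a with h | h
    · exact le_of_lt (lt_of_le_of_lt (hx₀min hcK) (hIa s hs h))
    rcases le_or_gt b s with h' | h'
    · exact le_of_lt (lt_of_le_of_lt (hx₀min hcK) (hIb s hs h'))
    · exact hx₀min ⟨le_of_lt h, le_of_lt h'⟩
  refine ⟨x₀, ⟨hx₀Ioo, hglobal⟩, ?_⟩
  rintro y ⟨hy, hymin⟩
  have h1 : φ y = 0 := hcrit y hy hymin
  have h2 : φ x₀ = 0 := hcrit x₀ hx₀Ioo hglobal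
  exact hφmono.injOn hy hx₀Ioo (h1.trans h2.symm)
end

section
/- Let μ : ℝ → ℝ be twice differentiable with μ(0) = 0, μ'(s) > 0 and μ''(s) ≤ 0 for all s ≥ 0 (Assumption A1). For L > 0 let s*(L) denote the unique maximizer of s ↦ μ(s)(L − s) over [0, L]. Then s* is strictly increasing: for all 0 < L₁ < L₂ one has s*(L₁) < s*(L₂). -/
open Set

/-- The optimal feedback value `s*(L)`, i.e. the (unique) maximizer of
`s ↦ μ(s)(L - s)` over `[0, L]`, is strictly increasing in `L`. -/
theorem stmt_5 (μ μ' μ'' : ℝ → ℝ)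
    (hd1 : ∀ s, HasDerivAt μ (μ' s) s)
    (hd2 : ∀ s, HasDerivAt μ' (μ'' s) s)
    (hμ0 : μ 0 = 0)
    (hμ' : ∀ s ≥ (0 : ℝ), 0 < μ' s)
    (hμ'' : ∀ s ≥ (0 : ℝ), μ'' s ≤ 0) :
    ∀ L₁ L₂ : ℝ, 0 < L₁ → L₁ < L₂ →
      ∀ s₁ s₂ : ℝ,
        (s₁ ∈ Icc 0 L₁ ∧ ∀ s ∈ Icc 0 L₁, μ s * (L₁ - s) ≤ μ s₁ * (L₁ - s₁)) →
        (s₂ ∈ Icc 0 L₂ ∧ ∀ s ∈ Icc 0 L₂, μ s * (L₂ - s) ≤ μ s₂ * (L₂ - s₂)) →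
        s₁ < s₂ := by
  intro L₁ L₂ hL₁ hL₁₂ s₁ s₂ ⟨hs₁, hmax₁⟩ ⟨hs₂, hmax₂⟩
  -- μ is strictly monotone on [0, ∞)
  have hmono : StrictMonoOn μ (Ici 0) := by
    apply strictMonoOn_of_deriv_pos (convex_Ici 0)
      (fun x _ => (hd1 x).continuousAt.continuousWithinAt)
    intro x hx
    rw [(hd1 x).deriv]
    exact hμ' x (le_of_lt (by simpa using hx))
  by_contra h
  push_neg at h
  -- exchange argument: μ s₁ ≤ μ s₂, hence s₁ ≤ s₂, hence s₁ = s₂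
  have hA : μ s₁ * (L₂ - s₁) ≤ μ s₂ * (L₂ - s₂) :=
    hmax₂ s₁ ⟨hs₁.1, le_trans hs₁.2 hL₁₂.le⟩
  have hB : μ s₂ * (L₁ - s₂) ≤ μ s₁ * (L₁ - s₁) :=
    hmax₁ s₂ ⟨hs₂.1, le_trans h hs₁.2⟩
  have hμle : μ s₁ ≤ μ s₂ := by nlinarith
  have hle : s₁ ≤ s₂ := by
    by_contra hlt
    push_neg at hlt
    exact absurd hμle (not_le.mpr (hmono hs₂.1 hs₁.1 hlt))
  have heq : s₁ = s₂ := le_antisymm hle h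
  -- the maximum value is positive, so 0 < s₁ < L₁
  have hμhalf : 0 < μ (L₁ / 2) := by
    have h2 : μ 0 < μ (L₁ / 2) :=
      hmono (mem_Ici.mpr le_rfl) (mem_Ici.mpr (by linarith)) (by linarith)
    rw [hμ0] at h2
    exact h2
  have hhalf : μ (L₁ / 2) * (L₁ - L₁ / 2) ≤ μ s₁ * (L₁ - s₁) :=
    hmax₁ _ ⟨by linarith, by linarith⟩
  have hpos : 0 < μ s₁ * (L₁ - s₁) := lt_of_lt_of_le (by nlinarith) hhalf
  have h0 : 0 < s₁ := by
    rcases eq_or_lt_of_le hs₁.1 with h' | h'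
    · rw [← h', hμ0] at hpos; linarith
    · exact h'
  have hLs : s₁ < L₁ := by
    rcases eq_or_lt_of_le hs₁.2 with h' | h'
    · rw [h'] at hpos; simp at hpos
    · exact h'
  -- first-order conditions at the interior maximizer
  have hderiv1 : HasDerivAt (fun x => μ x * (L₁ - x))
      (μ' s₁ * (L₁ - s₁) + μ s₁ * (0 - 1)) s₁ :=
    (hd1 s₁).mul ((hasDerivAt_const s₁ L₁).sub (hasDerivAt_id s₁))
  have hderiv2 : HasDerivAt (fun x => μ x * (L₂ - x))
      (μ' s₁ * (L₂ - s₁) + μ s₁ * (0 - 1)) s₁ :=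
    (hd1 s₁).mul ((hasDerivAt_const s₁ L₂).sub (hasDerivAt_id s₁))
  have hnh1 : Icc (0:ℝ) L₁ ∈ nhds s₁ := Icc_mem_nhds h0 hLs
  have hnh2 : Icc (0:ℝ) L₂ ∈ nhds s₁ := Icc_mem_nhds h0 (lt_trans hLs hL₁₂)
  have hloc1 : IsLocalMax (fun x => μ x * (L₁ - x)) s₁ :=
    Filter.eventually_of_mem hnh1 (fun x hx => hmax₁ x hx)
  have hloc2 : IsLocalMax (fun x => μ x * (L₂ - x)) s₁ := by
    refine Filter.eventually_of_mem hnh2 (fun x hx => ?_)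
    have := hmax₂ x hx
    rw [← heq] at this
    exact this
  have hz1 := hloc1.hasDerivAt_eq_zero hderiv1
  have hz2 := hloc2.hasDerivAt_eq_zero hderiv2
  have := hμ' s₁ h0.le
  nlinarith
end

section
/- Let μ_max > 0, K > 0 and L > 0, and define the Monod growth law μ(s) = μ_max·s/(K + s) for s ≥ 0. Then the unique maximizer over [0, L] of the function s ↦ μ(s)(L − s) is s = √(K² + K·L) − K, and this value lies in (0, L). -/
open Set

/-- Monod growth law: the unique maximizer of `s ↦ μ(s)(L - s)` over `[0, L]`
is `s = √(K² + K L) - K`, and it lies in `(0, L)`. -/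
theorem stmt_7 (μmax K L : ℝ) (hμmax : 0 < μmax) (hK : 0 < K) (hL : 0 < L)
    (μ : ℝ → ℝ) (hμ : μ = fun s => μmax * s / (K + s))
    (s' : ℝ) (hs' : s' = Real.sqrt (K ^ 2 + K * L) - K) :
    s' ∈ Ioo 0 L ∧
    (∀ s ∈ Icc 0 L, μ s * (L - s) ≤ μ s' * (L - s')) ∧
    (∀ s'' ∈ Icc 0 L, (∀ s ∈ Icc 0 L, μ s * (L - s) ≤ μ s'' * (L - s'')) →
      s'' = s') := by
  set c := Real.sqrt (K ^ 2 + K * L) with hcdef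
  have hnn : (0:ℝ) ≤ K ^ 2 + K * L := by positivity
  have hc : c ^ 2 = K ^ 2 + K * L := Real.sq_sqrt hnn
  have hc0 : 0 ≤ c := Real.sqrt_nonneg _
  have hKc : K < c := by nlinarith [mul_pos hK hL]
  have hcKL : c < K + L := by nlinarith [mul_pos hK hL]
  have hs'0 : 0 < s' := by rw [hs']; linarith
  have hs'L : s' < L := by rw [hs']; linarith
  have hKs' : 0 < K + s' := by linarith
  -- the key inequality
  have main : ∀ s ∈ Icc (0:ℝ) L, μ s * (L - s) ≤ μ s' * (L - s') := by
    intro s hs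
    have hKs : 0 < K + s := by linarith [hs.1]
    rw [hμ]
    simp only
    rw [div_mul_eq_mul_div, div_mul_eq_mul_div, div_le_div_iff₀ hKs hKs']
    have key : μmax * s * (L - s) * (K + s') + μmax * ((s + K - c) ^ 2 * c)
        = μmax * s' * (L - s') * (K + s) := by
      rw [hs']; linear_combination μmax * (c - s - K) * hc
    nlinarith [mul_nonneg hμmax.le (mul_nonneg (sq_nonneg (s + K - c)) hc0)]
  refine ⟨⟨hs'0, hs'L⟩, main, ?_⟩
  intro s'' hs'' hmax
  have h1 : μ s' * (L - s') ≤ μ s'' * (L - s'') :=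
    hmax s' ⟨hs'0.le, hs'L.le⟩
  have h2 : μ s'' * (L - s'') ≤ μ s' * (L - s') :=
    main s'' hs''
  have heq : μ s'' * (L - s'') = μ s' * (L - s') := le_antisymm h2 h1
  have hKs : 0 < K + s'' := by linarith [hs''.1]
  rw [hμ] at heq
  simp only at heq
  rw [div_mul_eq_mul_div, div_mul_eq_mul_div, div_eq_div_iff hKs.ne' hKs'.ne'] at heq
  have key : μmax * s'' * (L - s'') * (K + s') + μmax * ((s'' + K - c) ^ 2 * c)
      = μmax * s' * (L - s') * (K + s'') := by
    rw [hs']; linear_combination μmax * (c - s'' - K) * hc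
  have hz : μmax * ((s'' + K - c) ^ 2 * c) = 0 := by linarith
  have : (s'' + K - c) ^ 2 * c = 0 := by
    rcases mul_eq_zero.mp hz with h | h
    · linarith
    · exact h
  have : (s'' + K - c) ^ 2 = 0 := by
    rcases mul_eq_zero.mp this with h | h
    · exact h
    · nlinarith
  have := pow_eq_zero_iff (n := 2) (by norm_num) |>.mp this
  rw [hs']; linarith
end

section
/- Let a₁, a₂ > 0, let m : [0,∞) → ℝ be continuous with m(t) ≥ 0 for all t, and let S₁, S₂, r : [0,∞) → ℝ be functions with S₁, S₂ differentiable, satisfying S₁'(t) = a₁·m(t)·(S₂(t) − S₁(t)) and S₂'(t) = a₂·m(t)·(r(t) − S₂(t)) for all t ≥ 0, where r(t) ≤ S₂(t) for all t ≥ 0. If S₁(0) ≥ S₂(0), then S₁(t) ≥ S₂(t) for all t ≥ 0. -/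
open Set

/-- Invariance of the domain `{S₁ ≥ S₂}` for the two-compartment model of an
inhomogeneous resource when the injected concentration satisfies `r ≤ S₂`. -/
theorem stmt_8 (a₁ a₂ : ℝ) (ha₁ : 0 < a₁) (ha₂ : 0 < a₂)
    (m S₁ S₂ r : ℝ → ℝ)
    (hmc : ContinuousOn m (Ici 0))
    (hm : ∀ t ∈ Ici (0 : ℝ), 0 ≤ m t)
    (hS₁ : ∀ t ∈ Ici (0 : ℝ), HasDerivAt S₁ (a₁ * m t * (S₂ t - S₁ t)) t)
    (hS₂ : ∀ t ∈ Ici (0 : ℝ), HasDerivAt S₂ (a₂ * m t * (r t - S₂ t)) t)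
    (hr : ∀ t ∈ Ici (0 : ℝ), r t ≤ S₂ t)
    (h0 : S₂ 0 ≤ S₁ 0) :
    ∀ t ∈ Ici (0 : ℝ), S₂ t ≤ S₁ t := by
  -- integrating factor
  set k : ℝ → ℝ := fun s => a₁ * m s with hk
  have hkc : ContinuousOn k (Ici 0) := continuousOn_const.mul hmc
  have hkmeas : MeasureTheory.AEStronglyMeasurable k
      (MeasureTheory.volume.restrict (Ici (0:ℝ))) :=
    hkc.aestronglyMeasurable measurableSet_Ici
  set M : ℝ → ℝ := fun t => ∫ s in (0:ℝ)..t, k s with hMdef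
  have hint : ∀ t : ℝ, 0 ≤ t → IntervalIntegrable k MeasureTheory.volume 0 t := by
    intro t ht
    apply ContinuousOn.intervalIntegrable
    apply hkc.mono
    rw [uIcc_of_le ht]
    exact Icc_subset_Ici_self
  -- derivative of M at interior points (full derivative)
  have hMd : ∀ t : ℝ, 0 < t → HasDerivAt M (k t) t := by
    intro t ht
    have hmem : Ici (0:ℝ) ∈ nhds t := Ici_mem_nhds ht
    have hmeas : StronglyMeasurableAtFilter k (nhds t) := ⟨Ici 0, hmem, hkmeas⟩
    have hcont : ContinuousAt k t := (hkc t (le_of_lt ht)).continuousAt hmem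
    exact intervalIntegral.integral_hasDerivAt_right (hint t ht.le) hmeas hcont
  -- derivative of M at 0 from the right
  have hMd0 : HasDerivWithinAt M (k 0) (Ici 0) 0 := by
    have hmeas : StronglyMeasurableAtFilter k (nhdsWithin 0 (Ioi 0)) :=
      ⟨Ici 0, Filter.mem_of_superset self_mem_nhdsWithin Ioi_subset_Ici_self, hkmeas⟩
    have hcont : ContinuousWithinAt k (Ioi 0) 0 :=
      (hkc 0 self_mem_Ici).mono Ioi_subset_Ici_self
    exact intervalIntegral.integral_hasDerivWithinAt_right (hint 0 le_rfl) hmeas hcont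
  have hMdW : ∀ t ∈ Ici (0:ℝ), HasDerivWithinAt M (k t) (Ici 0) t := by
    intro t ht
    rcases eq_or_lt_of_le (mem_Ici.mp ht) with h | h
    · rw [← h]; exact hMd0
    · exact (hMd t h).hasDerivWithinAt
  -- the auxiliary function f = (S₁ - S₂) * exp M
  set g : ℝ → ℝ := fun t => S₁ t - S₂ t with hgdef
  set f : ℝ → ℝ := fun t => g t * Real.exp (M t) with hfdef
  have hgd : ∀ t ∈ Ici (0:ℝ), HasDerivAt g
      (a₁ * m t * (S₂ t - S₁ t) - a₂ * m t * (r t - S₂ t)) t := by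
    intro t ht
    exact (hS₁ t ht).sub (hS₂ t ht)
  have hfd : ∀ t ∈ Ici (0:ℝ), HasDerivWithinAt f
      ((a₁ * m t * (S₂ t - S₁ t) - a₂ * m t * (r t - S₂ t)) * Real.exp (M t)
        + g t * (k t * Real.exp (M t))) (Ici 0) t := by
    intro t ht
    have hexp : HasDerivWithinAt (fun s => Real.exp (M s)) (Real.exp (M t) * k t)
        (Ici 0) t := (hMdW t ht).exp
    have := ((hgd t ht).hasDerivWithinAt.mul hexp)
    exact this.congr_deriv (by ring)
  -- f is monotone on Ici 0
  have hfc : ContinuousOn f (Ici 0) := fun t ht =>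
    ((hfd t ht).continuousWithinAt)
  have hmono : MonotoneOn f (Ici 0) := by
    apply monotoneOn_of_hasDerivWithinAt_nonneg (convex_Ici 0) hfc
      (f' := fun t => (a₁ * m t * (S₂ t - S₁ t) - a₂ * m t * (r t - S₂ t)) * Real.exp (M t)
        + g t * (k t * Real.exp (M t)))
    · intro t ht
      rw [interior_Ici] at ht
      exact ((hfd t (mem_Ici.mpr (le_of_lt ht))).mono (interior_subset))
    · intro t ht
      rw [interior_Ici] at ht
      have ht' : (0:ℝ) ≤ t := le_of_lt ht
      have h1 : (a₁ * m t * (S₂ t - S₁ t) - a₂ * m t * (r t - S₂ t)) * Real.exp (M t)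
          + g t * (k t * Real.exp (M t))
          = a₂ * m t * (S₂ t - r t) * Real.exp (M t) := by
        simp only [hgdef, hk]; ring
      rw [h1]
      have h2 := hr t ht'
      have h3 := hm t ht'
      have := Real.exp_pos (M t)
      have h4 : (0:ℝ) ≤ S₂ t - r t := sub_nonneg.2 h2
      positivity
  -- conclude
  intro t ht
  have hf0 : f 0 = S₁ 0 - S₂ 0 := by
    simp [hfdef, hgdef, hMdef, intervalIntegral.integral_same]
  have h1 : f 0 ≤ f t := hmono self_mem_Ici ht (mem_Ici.mp ht)
  have h2 : 0 ≤ f t := by rw [hf0] at h1; linarith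
  have hexp : 0 < Real.exp (M t) := Real.exp_pos _
  have h3 : 0 ≤ g t := by
    by_contra hneg
    push_neg at hneg
    have : g t * Real.exp (M t) < 0 := mul_neg_of_neg_of_pos hneg hexp
    have hft : f t = g t * Real.exp (M t) := rfl
    rw [hft] at h2
    linarith
  simpa [hgdef, sub_nonneg] using h3
end

section
/- Let α > 0, m > 0, p ∈ (0,1) with p ≠ 1/2, and real numbers s_r and S₀. Define on [0,∞): S₁(t) = s_r + (S₀ − s_r)·((1−p)·exp(−αmt/(1−p)) − p·exp(−αmt/p))/(1 − 2p) and S₂(t) = s_r + (S₀ − s_r)·exp(−αmt/(1−p)). Then S₁(0) = S₂(0) = S₀, and for all t ≥ 0: S₁'(t) = (α/p)·m·(S₂(t) − S₁(t)) and S₂'(t) = (α/(1−p))·m·(s_r − S₂(t)). -/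
open Set

/-- Explicit solution of the two-compartment model under constant control,
asymmetric case `p ≠ 1/2`. -/
theorem stmt_9 (α m p sr S₀ : ℝ) (hα : 0 < α) (hm : 0 < m)
    (hp : p ∈ Ioo (0 : ℝ) 1) (hp' : p ≠ 1 / 2)
    (S₁ S₂ : ℝ → ℝ)
    (hS₁ : S₁ = fun t => sr + (S₀ - sr) *
      (((1 - p) * Real.exp (-(α * m * t) / (1 - p))
        - p * Real.exp (-(α * m * t) / p)) / (1 - 2 * p)))
    (hS₂ : S₂ = fun t => sr + (S₀ - sr) * Real.exp (-(α * m * t) / (1 - p))) :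
    S₁ 0 = S₀ ∧ S₂ 0 = S₀ ∧
    ∀ t ∈ Ici (0 : ℝ),
      HasDerivAt S₁ (α / p * m * (S₂ t - S₁ t)) t ∧
      HasDerivAt S₂ (α / (1 - p) * m * (sr - S₂ t)) t := by
  obtain ⟨hp0, hp1⟩ := hp
  have hq : (0:ℝ) < 1 - p := by linarith
  have hpne : p ≠ 0 := ne_of_gt hp0
  have hqne : (1 - p) ≠ 0 := ne_of_gt hq
  have h2p : 1 - 2 * p ≠ 0 := by
    intro h; apply hp'; linarith
  have h2p' : 1 - p * 2 ≠ 0 := by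
    intro h; apply hp'; linarith
  refine ⟨?_, ?_, ?_⟩
  · simp [hS₁, Real.exp_zero]
    field_simp
    ring
  · simp [hS₂, Real.exp_zero]
  · intro t _
    have d1 : HasDerivAt (fun t : ℝ => Real.exp (-(α * m * t) / (1 - p)))
        (-(α * m) / (1 - p) * Real.exp (-(α * m * t) / (1 - p))) t := by
      have : HasDerivAt (fun t : ℝ => -(α * m * t) / (1 - p)) (-(α * m) / (1 - p)) t := by
        have := (hasDerivAt_id t).const_mul (α * m)
        simpa [neg_div, mul_comm, mul_assoc] using
          (((hasDerivAt_id t).const_mul (α * m)).neg.div_const (1 - p))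
      simpa [mul_comm] using this.exp
    have d2 : HasDerivAt (fun t : ℝ => Real.exp (-(α * m * t) / p))
        (-(α * m) / p * Real.exp (-(α * m * t) / p)) t := by
      have : HasDerivAt (fun t : ℝ => -(α * m * t) / p) (-(α * m) / p) t := by
        simpa [neg_div, mul_comm, mul_assoc] using
          (((hasDerivAt_id t).const_mul (α * m)).neg.div_const p)
      simpa [mul_comm] using this.exp
    constructor
    · have h : HasDerivAt S₁
        ((S₀ - sr) * (((1 - p) * (-(α * m) / (1 - p) * Real.exp (-(α * m * t) / (1 - p)))
          - p * (-(α * m) / p * Real.exp (-(α * m * t) / p))) / (1 - 2 * p))) t := by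
        rw [hS₁]
        exact (((((d1.const_mul (1 - p)).sub (d2.const_mul p)).div_const
          (1 - 2 * p)).const_mul (S₀ - sr)).const_add sr)
      convert h using 1
      rw [hS₁, hS₂]
      field_simp
      ring
    · have h : HasDerivAt S₂
        ((S₀ - sr) * (-(α * m) / (1 - p) * Real.exp (-(α * m * t) / (1 - p)))) t := by
        rw [hS₂]
        exact ((d1.const_mul (S₀ - sr)).const_add sr)
      convert h using 1
      rw [hS₂]
      field_simp
      ring
end

section
/- Let α > 0 and p ∈ (0, 1/2), and define A(p, τ) = ((1−p)·exp(−ατ/(1−p)) − p·exp(−ατ/p))/(1 − 2p) for τ ≥ 0. Then there exists τ₀ ≥ 0 such that for all τ > τ₀ one has A(p, τ) < exp(−ατ). -/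
open Set

/-- Remark 1: for `p ∈ (0, 1/2)`, the inhomogeneous decay kernel
`A(p, τ)` is eventually smaller than the homogeneous one `exp(-ατ)`. -/
theorem stmt_11 (α p : ℝ) (hα : 0 < α) (hp : p ∈ Ioo (0 : ℝ) (1 / 2))
    (A : ℝ → ℝ)
    (hA : A = fun τ => ((1 - p) * Real.exp (-(α * τ) / (1 - p))
      - p * Real.exp (-(α * τ) / p)) / (1 - 2 * p)) :
    ∃ τ₀ ≥ (0 : ℝ), ∀ τ > τ₀, A τ < Real.exp (-(α * τ)) := by
  obtain ⟨hp0, hp2⟩ := hp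
  have h2p : 0 < 1 - 2 * p := by linarith
  have h1p : 0 < 1 - p := by linarith
  have hC : (1 : ℝ) < (1 - p) / (1 - 2 * p) := by
    rw [lt_div_iff₀ h2p]; linarith
  set C : ℝ := (1 - p) / (1 - 2 * p) with hCdef
  have hlogC : 0 < Real.log C := Real.log_pos hC
  refine ⟨(1 - p) / (α * p) * Real.log C, ?_, ?_⟩
  · positivity
  intro τ hτ
  have key : C * Real.exp (-(α * τ) / (1 - p)) < Real.exp (-(α * τ)) := by
    rw [← Real.exp_log (lt_trans one_pos hC), ← Real.exp_add]
    apply Real.exp_lt_exp.mpr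
    have h1 : Real.log C < α * τ * p / (1 - p) := by
      rw [gt_iff_lt, div_mul_eq_mul_div, div_lt_iff₀ (mul_pos hα hp0)] at hτ
      rw [lt_div_iff₀ h1p]
      nlinarith
    have heq : -(α * τ) / (1 - p) = -(α * τ) - α * τ * p / (1 - p) := by
      field_simp; ring
    rw [heq]; linarith
  have hA2 : A τ < C * Real.exp (-(α * τ) / (1 - p)) := by
    rw [hA]
    simp only
    rw [div_lt_iff₀ h2p, hCdef, div_mul_eq_mul_div, div_mul_cancel₀ _ (ne_of_gt h2p)]
    have := Real.exp_pos (-(α * τ) / p)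
    nlinarith
  linarith
end

section
/- Let μ : ℝ → ℝ be twice differentiable with μ'(s) > 0 and μ''(s) ≤ 0 for all s ≥ 0, let S₁ > S₂ > 0 and γ > 0. Then the function φ(s) = μ(s)·(1 + γ·(S₂ − s)/(S₁ − S₂)) is strictly concave on [0, S₂]. -/
open Set

/-- Lemma 3, first part: the Hamiltonian integrand
`φ(s) = μ(s)(1 + γ(S₂ - s)/(S₁ - S₂))` is strictly concave on `[0, S₂]`. -/
theorem stmt_12 (μ μ' μ'' : ℝ → ℝ)
    (hd1 : ∀ s, HasDerivAt μ (μ' s) s)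
    (hd2 : ∀ s, HasDerivAt μ' (μ'' s) s)
    (hμ' : ∀ s ≥ (0 : ℝ), 0 < μ' s)
    (hμ'' : ∀ s ≥ (0 : ℝ), μ'' s ≤ 0)
    (S₁ S₂ γ : ℝ) (hS₂ : 0 < S₂) (hS₁ : S₂ < S₁) (hγ : 0 < γ)
    (φ : ℝ → ℝ)
    (hφ : φ = fun s => μ s * (1 + γ * (S₂ - s) / (S₁ - S₂))) :
    StrictConcaveOn ℝ (Icc 0 S₂) φ := by
  have hd : 0 < S₁ - S₂ := by linarith
  set c : ℝ := γ / (S₁ - S₂) with hc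
  have hcpos : 0 < c := div_pos hγ hd
  set L : ℝ → ℝ := fun s => 1 + γ * (S₂ - s) / (S₁ - S₂) with hLdef
  have hLderiv : ∀ s : ℝ, HasDerivAt L (-c) s := by
    intro s
    have h1 : HasDerivAt (fun s : ℝ => S₂ - s) (-1) s := (hasDerivAt_id s).const_sub S₂
    have h2 := ((h1.const_mul γ).div_const (S₁ - S₂)).const_add 1
    have hce : -c = γ * -1 / (S₁ - S₂) := by rw [hc]; ring
    rw [hce]; exact h2
  set φ' : ℝ → ℝ := fun s => μ' s * L s + μ s * (-c) with hφ'def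
  have hφderiv : ∀ s : ℝ, HasDerivAt φ (φ' s) s := by
    intro s
    rw [hφ]
    exact (hd1 s).mul (hLderiv s)
  have hφ'deriv : ∀ s : ℝ, HasDerivAt φ' (μ'' s * L s + μ' s * (-c) + μ' s * (-c)) s := by
    intro s
    exact ((hd2 s).mul (hLderiv s)).add ((hd1 s).mul_const (-c))
  apply strictConcaveOn_of_deriv2_neg (convex_Icc 0 S₂)
  · exact fun s _ => (hφderiv s).continuousAt.continuousWithinAt
  · intro x hx
    rw [interior_Icc, mem_Ioo] at hx
    have hderiv1 : deriv φ = φ' := funext fun s => (hφderiv s).deriv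
    have : deriv (deriv φ) x = μ'' x * L x + μ' x * (-c) + μ' x * (-c) := by
      rw [hderiv1]; exact (hφ'deriv x).deriv
    simp only [Function.iterate_succ, Function.iterate_zero, Function.comp_apply, id_eq]
    rw [this]
    have hLpos : 0 < L x := by
      have : 0 ≤ γ * (S₂ - x) / (S₁ - S₂) :=
        div_nonneg (mul_nonneg hγ.le (by linarith [hx.2])) hd.le
      simp only [hLdef]; linarith
    have h1 : μ'' x * L x ≤ 0 := mul_nonpos_of_nonpos_of_nonneg (hμ'' x hx.1.le) hLpos.le
    have h2 : 0 < μ' x := hμ' x hx.1.le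
    nlinarith [mul_pos h2 hcpos]
end

section
/- Let μ : ℝ → ℝ be twice differentiable with μ(0) = 0, μ'(s) > 0 and μ''(s) ≤ 0 for all s ≥ 0, let S₁ > S₂ > 0 and γ > 0, and define φ(s) = μ(s)·(1 + γ·(S₂ − s)/(S₁ − S₂)) and ψ = μ'(S₂) − γ·μ(S₂)/(S₁ − S₂). Then φ(s) ≤ φ(S₂) for all s ∈ (0, S₂] if and only if ψ ≥ 0. -/
open Set Filter Topology

/-- Lemma 3, second part: the maximum of `φ` over `(0, S₂]` is attained at
`s = S₂` exactly when `ψ = μ'(S₂) - γ μ(S₂)/(S₁ - S₂) ≥ 0`. -/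
theorem stmt_13 (μ μ' μ'' : ℝ → ℝ)
    (hd1 : ∀ s, HasDerivAt μ (μ' s) s)
    (hd2 : ∀ s, HasDerivAt μ' (μ'' s) s)
    (hμ0 : μ 0 = 0)
    (hμ' : ∀ s ≥ (0 : ℝ), 0 < μ' s)
    (hμ'' : ∀ s ≥ (0 : ℝ), μ'' s ≤ 0)
    (S₁ S₂ γ : ℝ) (hS₂ : 0 < S₂) (hS₁ : S₂ < S₁) (hγ : 0 < γ)
    (φ : ℝ → ℝ) (ψ : ℝ)
    (hφ : φ = fun s => μ s * (1 + γ * (S₂ - s) / (S₁ - S₂)))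
    (hψ : ψ = μ' S₂ - γ * μ S₂ / (S₁ - S₂)) :
    (∀ s ∈ Ioc 0 S₂, φ s ≤ φ S₂) ↔ 0 ≤ ψ := by
  have hden : (0:ℝ) < S₁ - S₂ := sub_pos.2 hS₁
  set c : ℝ := γ / (S₁ - S₂) with hc
  have hcpos : 0 < c := div_pos hγ hden
  set g : ℝ → ℝ := fun s => 1 + γ * (S₂ - s) / (S₁ - S₂) with hgdef
  have hg : ∀ s : ℝ, HasDerivAt g (-c) s := by
    intro s
    have h0 : HasDerivAt (fun s : ℝ => 1 + γ * (S₂ - s) / (S₁ - S₂))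
        (γ * (0 - 1) / (S₁ - S₂)) s := by
      exact ((((hasDerivAt_const s S₂).sub (hasDerivAt_id s)).const_mul γ).div_const
        (S₁ - S₂)).const_add 1
    convert h0 using 1
    field_simp [hc]
    rw [hc, div_mul_cancel₀ _ hden.ne']
    ring
  set φ' : ℝ → ℝ := fun s => μ' s * g s - μ s * c with hφ'def
  have hdφ : ∀ s, HasDerivAt φ (φ' s) s := by
    intro s
    have h := (hd1 s).mul (hg s)
    rw [hφ]
    exact h.congr_deriv (by simp [hφ'def]; ring)
  set φ'' : ℝ → ℝ := fun s => μ'' s * g s - μ' s * c - μ' s * c with hφ''def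
  have hdφ' : ∀ s, HasDerivAt φ' (φ'' s) s := by
    intro s
    have h := ((hd2 s).mul (hg s)).sub ((hd1 s).mul_const c)
    exact h.congr_deriv (by simp [hφ''def]; ring)
  have hψeq : ψ = φ' S₂ := by
    have hg2 : g S₂ = 1 := by simp [hgdef]
    simp only [hφ'def, hg2, mul_one, hψ, hc]
    ring
  constructor
  · -- forward: max at S₂ ⇒ ψ ≥ 0
    intro H
    have hslope : Tendsto (slope φ S₂) (𝓝[≠] S₂) (𝓝 (φ' S₂)) :=
      hasDerivAt_iff_tendsto_slope.mp (hdφ S₂)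
    have h2 : Tendsto (slope φ S₂) (𝓝[<] S₂) (𝓝 (φ' S₂)) :=
      hslope.mono_left (nhdsWithin_mono _ (fun x hx => ne_of_lt hx))
    have hev : ∀ᶠ x in 𝓝[<] S₂, 0 ≤ slope φ S₂ x := by
      filter_upwards [Ioo_mem_nhdsLT_of_mem (⟨hS₂, le_refl S₂⟩ : S₂ ∈ Ioc 0 S₂)] with x hx
      have h1 : φ x ≤ φ S₂ := H x ⟨hx.1, hx.2.le⟩
      have hxlt : x - S₂ ≤ 0 := sub_nonpos.2 hx.2.le
      have heq : slope φ S₂ x = (φ x - φ S₂) / (x - S₂) := by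
        rw [slope_def_field]
      rw [heq, div_nonneg_iff]
      exact Or.inr ⟨sub_nonpos.2 h1, hxlt⟩
    rw [hψeq]
    exact ge_of_tendsto h2 hev
  · -- reverse: ψ ≥ 0 ⇒ max at S₂
    intro hψ0 s hs
    have hgpos : ∀ x ∈ Icc (0:ℝ) S₂, 0 < g x := by
      intro x hx
      have : 0 ≤ γ * (S₂ - x) / (S₁ - S₂) :=
        div_nonneg (mul_nonneg hγ.le (sub_nonneg.2 hx.2)) hden.le
      simp only [hgdef]
      linarith
    have hanti : AntitoneOn φ' (Icc 0 S₂) := by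
      apply antitoneOn_of_deriv_nonpos (convex_Icc 0 S₂)
      · exact fun x _ => ((hdφ' x).continuousAt).continuousWithinAt
      · intro x hx
        exact ((hdφ' x).differentiableAt).differentiableWithinAt
      · intro x hx
        rw [interior_Icc] at hx
        rw [(hdφ' x).deriv]
        have h1 : μ'' x * g x ≤ 0 :=
          mul_nonpos_of_nonpos_of_nonneg (hμ'' x hx.1.le) (hgpos x ⟨hx.1.le, hx.2.le⟩).le
        have h2 : 0 < μ' x * c := mul_pos (hμ' x hx.1.le) hcpos
        simp only [hφ''def]
        linarith
    have hpos : ∀ x ∈ interior (Icc (0:ℝ) S₂), 0 ≤ deriv φ x := by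
      intro x hx
      rw [interior_Icc] at hx
      rw [(hdφ x).deriv]
      have := hanti ⟨hx.1.le, hx.2.le⟩ (right_mem_Icc.2 (le_of_lt (hS₂.trans_le le_rfl))) hx.2.le
      calc (0:ℝ) ≤ ψ := hψ0
        _ = φ' S₂ := hψeq
        _ ≤ φ' x := this
    have hmono : MonotoneOn φ (Icc 0 S₂) := by
      apply monotoneOn_of_deriv_nonneg (convex_Icc 0 S₂)
      · exact fun x _ => ((hdφ x).continuousAt).continuousWithinAt
      · intro x hx
        exact ((hdφ x).differentiableAt).differentiableWithinAt
      · exact hpos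
    exact hmono ⟨hs.1.le, hs.2⟩ (right_mem_Icc.2 hS₂.le) hs.2
end

section
/- Let μ : ℝ → ℝ be twice differentiable with μ(0) = 0, μ'(s) > 0 and μ''(s) ≤ 0 for all s ≥ 0, and let S₁ > S₂ > 0. For γ > 0 let s*(γ) denote the unique maximizer over [0, S₂] of the function s ↦ μ(s)·(1 + γ·(S₂ − s)/(S₁ − S₂)). Then s* is nonincreasing: for all 0 < γ₁ < γ₂ one has s*(γ₂) ≤ s*(γ₁). -/
open Set

/-- The maximizer of `s ↦ μ(s)(1 + γ(S₂ - s)/(S₁ - S₂))` over `[0, S₂]` is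
nonincreasing in the adjoint ratio `γ`. -/
theorem stmt_14 (μ μ' μ'' : ℝ → ℝ)
    (hd1 : ∀ s, HasDerivAt μ (μ' s) s)
    (hd2 : ∀ s, HasDerivAt μ' (μ'' s) s)
    (hμ0 : μ 0 = 0)
    (hμ' : ∀ s ≥ (0 : ℝ), 0 < μ' s)
    (hμ'' : ∀ s ≥ (0 : ℝ), μ'' s ≤ 0)
    (S₁ S₂ : ℝ) (hS₂ : 0 < S₂) (hS₁ : S₂ < S₁) :
    ∀ γ₁ γ₂ : ℝ, 0 < γ₁ → γ₁ < γ₂ →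
      ∀ s₁ s₂ : ℝ,
        (s₁ ∈ Icc 0 S₂ ∧ ∀ s ∈ Icc 0 S₂,
          μ s * (1 + γ₁ * (S₂ - s) / (S₁ - S₂)) ≤
            μ s₁ * (1 + γ₁ * (S₂ - s₁) / (S₁ - S₂))) →
        (s₂ ∈ Icc 0 S₂ ∧ ∀ s ∈ Icc 0 S₂,
          μ s * (1 + γ₂ * (S₂ - s) / (S₁ - S₂)) ≤
            μ s₂ * (1 + γ₂ * (S₂ - s₂) / (S₁ - S₂))) →
        s₂ ≤ s₁ := by
  intro γ₁ γ₂ hγ₁ hγ12 s₁ s₂ ⟨hs₁, hmax₁⟩ ⟨hs₂, hmax₂⟩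
  by_contra hlt
  push_neg at hlt
  have hc : (0:ℝ) < S₁ - S₂ := by linarith
  have hne : S₁ - S₂ ≠ 0 := ne_of_gt hc
  -- μ is strictly monotone on [0, S₂]
  have hmono : StrictMonoOn μ (Icc 0 S₂) := by
    apply StrictMonoOn.mono (s := Ici (0:ℝ)) ?_ (Icc_subset_Ici_self)
    apply StrictMonoOn.mono (s := Ici (0:ℝ)) ?_ (le_refl _)
    apply strictMonoOn_of_deriv_pos (convex_Ici 0)
    · exact fun x _ => (hd1 x).continuousAt.continuousWithinAt
    · intro x hx
      rw [interior_Ici] at hx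
      rw [(hd1 x).deriv]
      exact hμ' x (le_of_lt hx)
  have hμlt : μ s₁ < μ s₂ := hmono hs₁ hs₂ hlt
  -- optimality comparisons
  have hA := hmax₁ s₂ hs₂
  have hB := hmax₂ s₁ hs₁
  have hA' : μ s₂ * ((S₁ - S₂) + γ₁ * (S₂ - s₂)) ≤ μ s₁ * ((S₁ - S₂) + γ₁ * (S₂ - s₁)) := by
    have h := mul_le_mul_of_nonneg_right hA hc.le
    field_simp at h
    nlinarith [h]
  have hB' : μ s₁ * ((S₁ - S₂) + γ₂ * (S₂ - s₁)) ≤ μ s₂ * ((S₁ - S₂) + γ₂ * (S₂ - s₂)) := by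
    have h := mul_le_mul_of_nonneg_right hB hc.le
    field_simp at h
    nlinarith [h]
  -- adding gives (γ₂ - γ₁)(μ s₂ (S₂-s₂) - μ s₁ (S₂-s₁)) ≥ 0
  have key : μ s₁ * (S₂ - s₁) ≤ μ s₂ * (S₂ - s₂) := by
    nlinarith [hA', hB', sub_pos.mpr hγ12]
  -- then hA' forces μ s₂ ≤ μ s₁
  nlinarith [hA', key, hc, hγ₁]
end

section
/- Let a₁, a₂ > 0, T > 0, and let m : [0, T] → ℝ be continuous with m(t) > 0 for all t ∈ [0, T]. Suppose γ : [0, T] → ℝ is differentiable and satisfies γ'(t) = m(t)·((a₂ − a₁)·γ(t) − a₂) for all t ∈ [0, T] and γ(T) = 0. Then γ(t) > 0 for all t ∈ [0, T). -/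
open Set

/-- The adjoint ratio `γ` of the two-compartment problem, solving
`γ' = m((a₂ - a₁)γ - a₂)` with `γ(T) = 0`, is positive on `[0, T)`. -/
theorem stmt_15 (a₁ a₂ T : ℝ) (ha₁ : 0 < a₁) (ha₂ : 0 < a₂) (hT : 0 < T)
    (m γ : ℝ → ℝ)
    (hmc : ContinuousOn m (Icc 0 T))
    (hm : ∀ t ∈ Icc 0 T, 0 < m t)
    (hγ : ∀ t ∈ Icc 0 T,
      HasDerivWithinAt γ (m t * ((a₂ - a₁) * γ t - a₂)) (Icc 0 T) t)
    (hγT : γ T = 0) :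
    ∀ t ∈ Ico 0 T, 0 < γ t := by
  set k : ℝ → ℝ := fun t => (a₂ - a₁) * m t with hk
  have hkc : ContinuousOn k (Icc 0 T) := continuousOn_const.mul hmc
  set F : ℝ → ℝ := fun t => ∫ s in (0:ℝ)..t, k s with hF
  -- F is continuous on [0, T]
  have hFc : ContinuousOn F (Icc 0 T) := by
    have : ContinuousOn F (uIcc 0 T) :=
      intervalIntegral.continuousOn_primitive_interval
        (by rw [uIcc_of_le hT.le]; exact hkc.integrableOn_Icc)
    rwa [uIcc_of_le hT.le] at this
  -- F has derivative k t at interior points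
  have hFd : ∀ t ∈ Ioo (0:ℝ) T, HasDerivAt F (k t) t := by
    intro t ht
    have hIccmem : Icc (0:ℝ) T ∈ nhds t := by
      rw [← interior_Icc] at ht
      exact mem_interior_iff_mem_nhds.mp ht
    have hint : IntervalIntegrable k MeasureTheory.volume 0 t := by
      apply ContinuousOn.intervalIntegrable
      apply hkc.mono
      rw [uIcc_of_le ht.1.le]
      exact Icc_subset_Icc le_rfl ht.2.le
    have hkIoo : ContinuousOn k (Ioo 0 T) := hkc.mono Ioo_subset_Icc_self
    have hmeas : StronglyMeasurableAtFilter k (nhds t) :=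
      hkIoo.stronglyMeasurableAtFilter isOpen_Ioo t ht
    have hcont : ContinuousAt k t := (hkc.continuousAt hIccmem)
    exact intervalIntegral.integral_hasDerivAt_right hint hmeas hcont
  set ψ : ℝ → ℝ := fun t => γ t * Real.exp (-F t) with hψ
  have hγc : ContinuousOn γ (Icc 0 T) := fun t ht => (hγ t ht).continuousWithinAt
  have hψc : ContinuousOn ψ (Icc 0 T) :=
    hγc.mul ((Real.continuous_exp.comp_continuousOn hFc.neg))
  -- derivative of ψ at interior points
  have hψd : ∀ t ∈ Ioo (0:ℝ) T, HasDerivAt ψ (-(m t * a₂ * Real.exp (-F t))) t := by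
    intro t ht
    have hIccmem : Icc (0:ℝ) T ∈ nhds t := by
      rw [← interior_Icc] at ht
      exact mem_interior_iff_mem_nhds.mp ht
    have htIcc : t ∈ Icc (0:ℝ) T := Ioo_subset_Icc_self ht
    have hγd : HasDerivAt γ (m t * ((a₂ - a₁) * γ t - a₂)) t :=
      (hγ t htIcc).hasDerivAt hIccmem
    have hE : HasDerivAt (fun u => Real.exp (-F u)) (Real.exp (-F t) * (-(k t))) t :=
      ((hFd t ht).neg).exp
    have := hγd.fun_mul hE
    refine this.congr_deriv ?_
    simp only [hk]; ring
  have hanti : StrictAntiOn ψ (Icc 0 T) := by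
    apply strictAntiOn_of_deriv_neg (convex_Icc 0 T) hψc
    intro x hx
    rw [interior_Icc] at hx
    rw [(hψd x hx).deriv]
    have hmx : 0 < m x := hm x (Ioo_subset_Icc_self hx)
    have : 0 < m x * a₂ * Real.exp (-F x) :=
      mul_pos (mul_pos hmx ha₂) (Real.exp_pos _)
    linarith
  intro t ht
  have h1 : ψ T < ψ t :=
    hanti ⟨ht.1, ht.2.le⟩ (right_mem_Icc.mpr hT.le) ht.2
  have hψT : ψ T = 0 := by simp [hψ, hγT]
  rw [hψT] at h1
  -- ψ t = γ t * exp(-F t) > 0 with exp > 0 ⇒ γ t > 0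
  by_contra hle
  push_neg at hle
  have : ψ t ≤ 0 :=
    mul_nonpos_iff.mpr (Or.inr ⟨hle, (Real.exp_pos _).le⟩)
  linarith
end

section
/- Let μ : ℝ → ℝ be twice differentiable with μ(0) = 0, μ'(s) > 0 and μ''(s) ≤ 0 for all s ≥ 0, and let β > 0 and S̲ > 0. Then the equation μ(s) = β·μ'(s)·(S̲ − s) has exactly one solution s̄ in the open interval (0, S̲). -/
open Set

/-- The threshold equation `μ(s) = β μ'(s)(S̲ - s)` has exactly one solution
in `(0, S̲)`. -/
theorem stmt_16 (μ μ' μ'' : ℝ → ℝ)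
    (hd1 : ∀ s, HasDerivAt μ (μ' s) s)
    (hd2 : ∀ s, HasDerivAt μ' (μ'' s) s)
    (hμ0 : μ 0 = 0)
    (hμ' : ∀ s ≥ (0 : ℝ), 0 < μ' s)
    (hμ'' : ∀ s ≥ (0 : ℝ), μ'' s ≤ 0)
    (β Sbar : ℝ) (hβ : 0 < β) (hSbar : 0 < Sbar) :
    ∃! s : ℝ, s ∈ Ioo 0 Sbar ∧ μ s = β * μ' s * (Sbar - s) := by
  set F : ℝ → ℝ := fun s => μ s - β * μ' s * (Sbar - s) with hF
  have hFd : ∀ s, HasDerivAt F ((1 + β) * μ' s - β * μ'' s * (Sbar - s)) s := by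
    intro s
    have h := (hd1 s).sub
      (((hd2 s).const_mul β).mul ((hasDerivAt_const s Sbar).sub (hasDerivAt_id s)))
    exact h.congr_deriv (by simp only [Pi.sub_apply, id_eq]; ring)
  have hdiff : Differentiable ℝ F := fun s => (hFd s).differentiableAt
  have hcont : Continuous F := hdiff.continuous
  have hmono : StrictMonoOn F (Icc 0 Sbar) := by
    apply strictMonoOn_of_deriv_pos (convex_Icc 0 Sbar) hcont.continuousOn
    intro x hx
    rw [interior_Icc] at hx
    rw [(hFd x).deriv]
    have h1 : 0 < μ' x := hμ' x hx.1.le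
    have h2 : μ'' x ≤ 0 := hμ'' x hx.1.le
    have h3 : 0 < Sbar - x := sub_pos.2 hx.2
    have h4 : 0 ≤ (-μ'' x) * (Sbar - x) := mul_nonneg (neg_nonneg.2 h2) h3.le
    nlinarith [mul_nonneg hβ.le h4]
  have hμmono : StrictMonoOn μ (Icc 0 Sbar) := by
    apply strictMonoOn_of_deriv_pos (convex_Icc 0 Sbar)
      (fun s _ => (hd1 s).continuousAt.continuousWithinAt)
    intro x hx
    rw [interior_Icc] at hx
    rw [(hd1 x).deriv]
    exact hμ' x hx.1.le
  have hF0 : F 0 < 0 := by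
    have h := hμ' 0 le_rfl
    simp only [hF]
    nlinarith [mul_pos (mul_pos hβ h) hSbar]
  have hFS : 0 < F Sbar := by
    have h : μ 0 < μ Sbar := hμmono (left_mem_Icc.2 hSbar.le) (right_mem_Icc.2 hSbar.le) hSbar
    rw [hμ0] at h
    simp only [hF, sub_self, mul_zero, sub_zero]
    exact h
  have hex : (0 : ℝ) ∈ F '' Ioo 0 Sbar :=
    intermediate_value_Ioo hSbar.le hcont.continuousOn ⟨hF0, hFS⟩
  obtain ⟨s, hs, hFs⟩ := hex
  refine ⟨s, ⟨hs, by simpa [hF, sub_eq_zero] using hFs⟩, ?_⟩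
  rintro t ⟨ht, htq⟩
  have hFt : F t = 0 := by simp [hF, htq]
  exact hmono.injOn (Ioo_subset_Icc_self ht) (Ioo_subset_Icc_self hs) (by rw [hFt, hFs])
end

section
/- Let μ_max > 0, K > 0, β > 0 and S̲ > 0, and define the Monod law μ(s) = μ_max·s/(K + s). Then s̄ = (−K(1+β) + √(K²(1+β)² + 4KβS̲))/2 lies in (0, S̲) and satisfies μ(s̄) = β·μ'(s̄)·(S̲ − s̄); moreover it is the unique solution of this equation in (0, S̲). -/
open Set

lemma monod_deriv (μmax K : ℝ) (s : ℝ) (hs : K + s ≠ 0) :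
    deriv (fun s => μmax * s / (K + s)) s = μmax * K / (K + s) ^ 2 := by
  have h1 : HasDerivAt (fun s : ℝ => μmax * s) μmax s := by
    simpa using (hasDerivAt_id s).const_mul μmax
  have h2 : HasDerivAt (fun s : ℝ => K + s) 1 s := by
    simpa using (hasDerivAt_id s).const_add K
  have h := (h1.div h2 hs)
  rw [(show HasDerivAt (fun s => μmax * s / (K + s)) _ s from h).deriv]
  field_simp
  ring

/-- Monod law: explicit closed-form root of the threshold equation
`μ(s) = β μ'(s)(S̲ - s)` in `(0, S̲)`, and its uniqueness. -/
theorem stmt_17 (μmax K β Sbar : ℝ)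
    (hμmax : 0 < μmax) (hK : 0 < K) (hβ : 0 < β) (hSbar : 0 < Sbar)
    (μ : ℝ → ℝ) (hμ : μ = fun s => μmax * s / (K + s))
    (sbar : ℝ)
    (hsbar : sbar = (-(K * (1 + β)) +
      Real.sqrt (K ^ 2 * (1 + β) ^ 2 + 4 * K * β * Sbar)) / 2) :
    sbar ∈ Ioo 0 Sbar ∧
    μ sbar = β * deriv μ sbar * (Sbar - sbar) ∧
    ∀ s ∈ Ioo 0 Sbar, μ s = β * deriv μ s * (Sbar - s) → s = sbar := by
  have hDpos : (0:ℝ) < K ^ 2 * (1 + β) ^ 2 + 4 * K * β * Sbar := by positivity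
  set r : ℝ := Real.sqrt (K ^ 2 * (1 + β) ^ 2 + 4 * K * β * Sbar) with hr
  have hr0 : 0 ≤ r := Real.sqrt_nonneg _
  have hr2 : r ^ 2 = K ^ 2 * (1 + β) ^ 2 + 4 * K * β * Sbar :=
    Real.sq_sqrt hDpos.le
  -- sbar > 0
  have hrgt : K * (1 + β) < r := by
    nlinarith [hr2, hr0, mul_pos (mul_pos hK hβ) hSbar]
  have hpos : 0 < sbar := by rw [hsbar]; linarith
  -- sbar < Sbar
  have hlt : sbar < Sbar := by
    have hsq : r ^ 2 < (K * (1 + β) + 2 * Sbar) ^ 2 := by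
      nlinarith [hr2, mul_pos hK hSbar, sq_nonneg Sbar, mul_pos (mul_pos hK hβ) hSbar]
    have hrlt : r < K * (1 + β) + 2 * Sbar :=
      lt_of_pow_lt_pow_left₀ 2 (by positivity) hsq
    rw [hsbar]; linarith
  -- quadratic identity
  have hq : sbar ^ 2 + K * (1 + β) * sbar - K * β * Sbar = 0 := by
    have h2s : 2 * sbar + K * (1 + β) = r := by rw [hsbar]; ring
    nlinarith [hr2, h2s]
  have hks : (0:ℝ) < K + sbar := by linarith
  have hsat : μ sbar = β * deriv μ sbar * (Sbar - sbar) := by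
    rw [hμ, monod_deriv μmax K sbar hks.ne']
    show μmax * sbar / (K + sbar) = β * (μmax * K / (K + sbar) ^ 2) * (Sbar - sbar)
    have hrw : β * (μmax * K / (K + sbar) ^ 2) * (Sbar - sbar)
        = β * μmax * K * (Sbar - sbar) / (K + sbar) ^ 2 := by ring
    rw [hrw, div_eq_div_iff hks.ne' (by positivity : ((K + sbar) ^ 2 : ℝ) ≠ 0)]
    linear_combination μmax * (K + sbar) * hq
  refine ⟨⟨hpos, hlt⟩, hsat, ?_⟩
  rintro s ⟨hs0, hsS⟩ heq
  have hks' : (0:ℝ) < K + s := by linarith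
  rw [hμ, monod_deriv μmax K s hks'.ne'] at heq
  have h : μmax * s * (K + s) ^ 2 = β * (μmax * K) * (Sbar - s) * (K + s) := by
    field_simp at heq
    linear_combination μmax * (K + s) * heq
  have key : (s ^ 2 + K * (1 + β) * s - K * β * Sbar) * (μmax * (K + s)) = 0 := by
    linear_combination h
  have hq' : s ^ 2 + K * (1 + β) * s - K * β * Sbar = 0 := by
    rcases mul_eq_zero.mp key with h0 | h0
    · exact h0
    · nlinarith [mul_pos hμmax hks']
  have hsum : 0 < s + sbar + K * (1 + β) := by positivity
  have key2 : (sbar - s) * (sbar + s + K * (1 + β)) = 0 := by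
    linear_combination hq - hq'
  rcases mul_eq_zero.mp key2 with h0 | h0
  · linarith
  · linarith
end
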